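/- If y = a+ib with a ≠ -1, b real, is a root of N_t, and we set u = 1/(1+a) and v = b/(1+a), then (u,v) lies on the elliptic curve v^2 = u^3 - 2u^2 + 2u - 1 = (u-1)(u^2 - u + 1). -/

import Mathlib

noncomputable def neckC (t : ℕ) (y : ℂ) : ℂ :=
  (1 / 2) * (1 + y) ^ t + (1 / 2) * (1 + y ^ 2) ^ (t / 2) * (1 + y) ^ (t % 2)

theorem neckC_root_elliptic (t : ℕ) (a b : ℝ) (ha : a ≠ -1)
    (hy : neckC t (Complex.mk a b) = 0) :
    (b / (1 + a)) ^ 2 =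
      (1 / (1 + a)) ^ 3 - 2 * (1 / (1 + a)) ^ 2 + 2 * (1 / (1 + a)) - 1 := by
  set y : ℂ := Complex.mk a b with hydef
  have h1a : (1 : ℝ) + a ≠ 0 := fun h => ha (by linarith)
  have hy1 : (1 : ℂ) + y ≠ 0 := by
    intro h
    have : ((1 : ℂ) + y).re = 0 := by rw [h]; simp
    simp [hydef, Complex.add_re] at this
    exact h1a this
  -- handle small t
  match t, hy with
  | 0, hy => simp [neckC] at hy
  | 1, hy =>
    exfalso
    apply hy1
    have : (1 / 2 : ℂ) * (1 + y) + 1 / 2 * (1 + y) = 0 := by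
      simpa [neckC] using hy
    have h2 : (1 : ℂ) + y = 0 := by linear_combination this
    exact h2
  | (n + 2), hy =>
    set t := n + 2 with ht
    have hk : t / 2 ≠ 0 := by omega
    have heq : (1 + y) ^ t = -((1 + y ^ 2) ^ (t / 2) * (1 + y) ^ (t % 2)) := by
      have := hy
      unfold neckC at this
      linear_combination 2 * this
    have habs : ‖1 + y‖ ^ t =
        ‖1 + y ^ 2‖ ^ (t / 2) * ‖1 + y‖ ^ (t % 2) := by
      have := congrArg (‖·‖) heq
      simpa [map_mul, map_pow] using this
    have hsplit : ‖1 + y‖ ^ t =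
        (‖1 + y‖ ^ 2) ^ (t / 2) * ‖1 + y‖ ^ (t % 2) := by
      rw [← pow_mul, ← pow_add]
      congr 1
      omega
    have hpos : 0 < ‖1 + y‖ ^ (t % 2) :=
      pow_pos (norm_pos_iff.mpr hy1) _
    have hcancel : (‖1 + y‖ ^ 2) ^ (t / 2) =
        ‖1 + y ^ 2‖ ^ (t / 2) := by
      have := hsplit.symm.trans habs
      exact mul_right_cancel₀ (ne_of_gt hpos) this
    have hkey : ‖1 + y‖ ^ 2 = ‖1 + y ^ 2‖ :=
      (pow_left_inj₀ (by positivity) (by positivity) hk).mp hcancel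
    have hns : Complex.normSq (1 + y) ^ 2 = Complex.normSq (1 + y ^ 2) := by
      have := congrArg (· ^ 2) hkey
      simpa [Complex.sq_norm, ← pow_mul] using this
    have hre : ((1 : ℂ) + y).re = 1 + a := by simp [hydef]
    have him : ((1 : ℂ) + y).im = b := by simp [hydef]
    have hre2 : ((1 : ℂ) + y ^ 2).re = 1 + (a * a - b * b) := by
      simp [hydef, pow_two, Complex.mul_re]
    have him2 : ((1 : ℂ) + y ^ 2).im = a * b + b * a := by
      simp [hydef, pow_two, Complex.mul_im]
    rw [Complex.normSq_apply, Complex.normSq_apply, hre, him, hre2, him2] at hns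
    -- hns : ((1+a)^2 + b^2)^2 = (1+(a*a-b*b))^2 + (a*b+b*a)^2 (in * form)
    have hb2 : b ^ 2 * (1 + a) = -a * (1 + a + a ^ 2) := by nlinarith [hns]
    field_simp
    linear_combination hb2
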